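/- Equivalence of the CDF form and the quantile form of the one-dimensional earth mover's distance: let μ and ν be probability measures on ℝ with cumulative distribution functions F(t) = μ(Iic t) and G(t) = ν(Iic t), and define their generalized inverse (quantile) functions F⁻¹(p) = sInf {x : p ≤ F(x)} and G⁻¹(p) = sInf {x : p ≤ G(x)} for p ∈ (0,1). Then ∫⁻_{t ∈ ℝ} ENNReal.ofReal |F(t) − G(t)| dt = ∫⁻_{p ∈ Ioo 0 1} ENNReal.ofReal |F⁻¹(p) − G⁻¹(p)| dp, where both sides are Lebesgue integrals with values in [0, ∞] (they may both be infinite). -/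

import Mathlib

open MeasureTheory Set Filter Topology ProbabilityTheory

section Aux

variable (μ : Measure ℝ) [IsProbabilityMeasure μ]

omit [IsProbabilityMeasure μ] in
private lemma quantile_mem_aux {p : ℝ} (hp : p ∈ Set.Ioo (0 : ℝ) 1) (t : ℝ) :
    sInf {x : ℝ | p ≤ cdf μ x} ≤ t ↔ p ≤ cdf μ t := by
  set S : Set ℝ := {x : ℝ | p ≤ cdf μ x} with hS
  have hne : S.Nonempty := by
    obtain ⟨x, hx⟩ := ((tendsto_cdf_atTop μ).eventually (eventually_ge_nhds hp.2)).exists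
    exact ⟨x, hx⟩
  have hbdd : BddBelow S := by
    obtain ⟨x₀, hx₀⟩ := ((tendsto_cdf_atBot μ).eventually (eventually_lt_nhds hp.1)).exists
    refine ⟨x₀, fun y hy => ?_⟩
    by_contra h
    exact absurd (hy.trans (monotone_cdf μ (not_le.1 h).le)) (not_le.2 hx₀)
  have hmem : p ≤ cdf μ (sInf S) := by
    have hrc : Tendsto (cdf μ) (𝓝[>] (sInf S)) (𝓝 (cdf μ (sInf S))) :=
      ((cdf μ).right_continuous (sInf S)).mono_left
        (nhdsWithin_mono _ Ioi_subset_Ici_self)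
    refine ge_of_tendsto hrc (eventually_nhdsWithin_of_forall fun y hy => ?_)
    obtain ⟨x, hxS, hxy⟩ := exists_lt_of_csInf_lt hne hy
    exact hxS.trans (monotone_cdf μ hxy.le)
  constructor
  · intro h
    exact hmem.trans (monotone_cdf μ h)
  · intro h
    exact csInf_le hbdd h

end Aux

private lemma fiberP (a b : ℝ) (h0a : 0 ≤ a) (ha1 : a ≤ 1) (h0b : 0 ≤ b) (hb1 : b ≤ 1) :
    volume {p : ℝ | p ∈ Set.Ioo (0 : ℝ) 1 ∧ Xor' (p ≤ a) (p ≤ b)} =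
      ENNReal.ofReal |a - b| := by
  rcases le_total a b with hab | hab
  · have hsub1 : Set.Ioo a b ⊆ {p : ℝ | p ∈ Set.Ioo (0 : ℝ) 1 ∧ Xor' (p ≤ a) (p ≤ b)} := by
      intro p hp
      exact ⟨⟨lt_of_le_of_lt h0a hp.1, lt_of_lt_of_le hp.2 hb1⟩,
        Or.inr ⟨hp.2.le, not_le.2 hp.1⟩⟩
    have hsub2 : {p : ℝ | p ∈ Set.Ioo (0 : ℝ) 1 ∧ Xor' (p ≤ a) (p ≤ b)} ⊆ Set.Ioc a b := by
      rintro p ⟨_, (⟨h1, h2⟩ | ⟨h1, h2⟩)⟩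
      · exact absurd (h1.trans hab) h2
      · exact ⟨not_le.1 h2, h1⟩
    have habs : |a - b| = b - a := by
      rw [abs_sub_comm, abs_of_nonneg (sub_nonneg.2 hab)]
    rw [habs]
    refine le_antisymm ?_ ?_
    · calc volume {p : ℝ | p ∈ Set.Ioo (0 : ℝ) 1 ∧ Xor' (p ≤ a) (p ≤ b)}
          ≤ volume (Set.Ioc a b) := measure_mono hsub2
        _ = ENNReal.ofReal (b - a) := Real.volume_Ioc
    · calc ENNReal.ofReal (b - a) = volume (Set.Ioo a b) := Real.volume_Ioo.symm
        _ ≤ _ := measure_mono hsub1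
  · have hsub1 : Set.Ioo b a ⊆ {p : ℝ | p ∈ Set.Ioo (0 : ℝ) 1 ∧ Xor' (p ≤ a) (p ≤ b)} := by
      intro p hp
      exact ⟨⟨lt_of_le_of_lt h0b hp.1, lt_of_lt_of_le hp.2 ha1⟩,
        Or.inl ⟨hp.2.le, not_le.2 hp.1⟩⟩
    have hsub2 : {p : ℝ | p ∈ Set.Ioo (0 : ℝ) 1 ∧ Xor' (p ≤ a) (p ≤ b)} ⊆ Set.Ioc b a := by
      rintro p ⟨_, (⟨h1, h2⟩ | ⟨h1, h2⟩)⟩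
      · exact ⟨not_le.1 h2, h1⟩
      · exact absurd (h1.trans hab) h2
    have habs : |a - b| = a - b := abs_of_nonneg (sub_nonneg.2 hab)
    rw [habs]
    refine le_antisymm ?_ ?_
    · calc volume {p : ℝ | p ∈ Set.Ioo (0 : ℝ) 1 ∧ Xor' (p ≤ a) (p ≤ b)}
          ≤ volume (Set.Ioc b a) := measure_mono hsub2
        _ = ENNReal.ofReal (a - b) := Real.volume_Ioc
    · calc ENNReal.ofReal (a - b) = volume (Set.Ioo b a) := Real.volume_Ioo.symm
        _ ≤ _ := measure_mono hsub1

private lemma fiberT (a b : ℝ) :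
    volume {t : ℝ | Xor' (a ≤ t) (b ≤ t)} = ENNReal.ofReal |b - a| := by
  rcases le_total a b with hab | hab
  · have : {t : ℝ | Xor' (a ≤ t) (b ≤ t)} = Set.Ico a b := by
      ext t
      constructor
      · rintro (⟨h1, h2⟩ | ⟨h1, h2⟩)
        · exact ⟨h1, not_le.1 h2⟩
        · exact absurd (hab.trans h1) h2
      · rintro ⟨h1, h2⟩
        exact Or.inl ⟨h1, not_le.2 h2⟩
    rw [this, Real.volume_Ico, abs_of_nonneg (sub_nonneg.2 hab)]
  · have : {t : ℝ | Xor' (a ≤ t) (b ≤ t)} = Set.Ico b a := by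
      ext t
      constructor
      · rintro (⟨h1, h2⟩ | ⟨h1, h2⟩)
        · exact absurd (hab.trans h1) h2
        · exact ⟨h1, not_le.1 h2⟩
      · rintro ⟨h1, h2⟩
        exact Or.inr ⟨h1, not_le.2 h2⟩
    rw [this, Real.volume_Ico, abs_sub_comm, abs_of_nonneg (sub_nonneg.2 hab)]

/-- Equivalence of the CDF form and the quantile form of the one-dimensional
earth mover's distance. -/
theorem emd_cdf_eq_quantile (μ ν : Measure ℝ)
    [IsProbabilityMeasure μ] [IsProbabilityMeasure ν]
    (F G : ℝ → ℝ)
    (hF : ∀ t : ℝ, F t = (μ (Set.Iic t)).toReal)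
    (hG : ∀ t : ℝ, G t = (ν (Set.Iic t)).toReal)
    (Finv Ginv : ℝ → ℝ)
    (hFinv : ∀ p ∈ Set.Ioo (0 : ℝ) 1, Finv p = sInf {x : ℝ | p ≤ F x})
    (hGinv : ∀ p ∈ Set.Ioo (0 : ℝ) 1, Ginv p = sInf {x : ℝ | p ≤ G x}) :
    ∫⁻ t : ℝ, ENNReal.ofReal |F t - G t| =
      ∫⁻ p in Set.Ioo (0 : ℝ) 1, ENNReal.ofReal |Finv p - Ginv p| := by
  have hF' : ∀ t, F t = cdf μ t := fun t => by rw [hF, cdf_eq_real, measureReal_def]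
  have hG' : ∀ t, G t = cdf ν t := fun t => by rw [hG, cdf_eq_real, measureReal_def]
  set s : Set (ℝ × ℝ) :=
    {q : ℝ × ℝ | q.2 ∈ Set.Ioo (0 : ℝ) 1 ∧ Xor' (q.2 ≤ cdf μ q.1) (q.2 ≤ cdf ν q.1)} with hs_def
  have hmF : Measurable fun q : ℝ × ℝ => cdf μ q.1 :=
    (monotone_cdf μ).measurable.comp measurable_fst
  have hmG : Measurable fun q : ℝ × ℝ => cdf ν q.1 :=
    (monotone_cdf ν).measurable.comp measurable_fst
  have hs : MeasurableSet s := by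
    have h1 : MeasurableSet {q : ℝ × ℝ | q.2 ≤ cdf μ q.1} := measurableSet_le measurable_snd hmF
    have h2 : MeasurableSet {q : ℝ × ℝ | q.2 ≤ cdf ν q.1} := measurableSet_le measurable_snd hmG
    have h3 : MeasurableSet {q : ℝ × ℝ | q.2 ∈ Set.Ioo (0 : ℝ) 1} :=
      measurable_snd measurableSet_Ioo
    have : s = {q : ℝ × ℝ | q.2 ∈ Set.Ioo (0 : ℝ) 1} ∩
        (({q : ℝ × ℝ | q.2 ≤ cdf μ q.1} ∩ {q : ℝ × ℝ | q.2 ≤ cdf ν q.1}ᶜ) ∪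
          ({q : ℝ × ℝ | q.2 ≤ cdf ν q.1} ∩ {q : ℝ × ℝ | q.2 ≤ cdf μ q.1}ᶜ)) := by
      ext q
      simp only [hs_def, Set.mem_setOf_eq, Set.mem_inter_iff, Set.mem_union, Set.mem_compl_iff,
        Xor', xor_def]
    rw [this]
    exact h3.inter ((h1.inter h2.compl).union (h2.inter h1.compl))
  have step1 : ∫⁻ t : ℝ, ENNReal.ofReal |F t - G t| =
      ∫⁻ t : ℝ, volume {p : ℝ | (t, p) ∈ s} := by
    refine lintegral_congr fun t => ?_
    have : {p : ℝ | (t, p) ∈ s} =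
        {p : ℝ | p ∈ Set.Ioo (0 : ℝ) 1 ∧ Xor' (p ≤ cdf μ t) (p ≤ cdf ν t)} := rfl
    rw [this, fiberP _ _ (cdf_nonneg μ t) (cdf_le_one μ t) (cdf_nonneg ν t) (cdf_le_one ν t),
      hF' t, hG' t]
  have step2 : ∫⁻ t : ℝ, volume {p : ℝ | (t, p) ∈ s} =
      ∫⁻ t : ℝ, ∫⁻ p : ℝ, s.indicator 1 (t, p) := by
    refine lintegral_congr fun t => ?_
    have hfib : MeasurableSet (Prod.mk t ⁻¹' s) := measurable_prodMk_left hs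
    rw [show (fun p : ℝ => s.indicator 1 (t, p)) = (Prod.mk t ⁻¹' s).indicator 1 from
      funext fun p => by by_cases h : (t, p) ∈ s <;>
        simp [Set.indicator_apply, h]]
    rw [lintegral_indicator_one hfib]
    rfl
  have step3 : ∫⁻ t : ℝ, ∫⁻ p : ℝ, s.indicator 1 (t, p) =
      ∫⁻ p : ℝ, ∫⁻ t : ℝ, s.indicator 1 (t, p) := by
    apply lintegral_lintegral_swap
    have : Function.uncurry (fun t p : ℝ => s.indicator (1 : ℝ × ℝ → ENNReal) (t, p)) = s.indicator 1 := rfl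
    rw [this]
    exact ((measurable_one : Measurable (1 : ℝ × ℝ → ENNReal)).indicator hs).aemeasurable
  have step4 : ∫⁻ p : ℝ, ∫⁻ t : ℝ, s.indicator 1 (t, p) =
      ∫⁻ p : ℝ, volume {t : ℝ | (t, p) ∈ s} := by
    refine lintegral_congr fun p => ?_
    have hfib : MeasurableSet ((fun t : ℝ => (t, p)) ⁻¹' s) := measurable_prodMk_right hs
    rw [show (fun t : ℝ => s.indicator 1 (t, p)) = ((fun t : ℝ => (t, p)) ⁻¹' s).indicator 1 from
      funext fun t => by by_cases h : (t, p) ∈ s <;>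
        simp [Set.indicator_apply, h]]
    rw [lintegral_indicator_one hfib]
    rfl
  have step5 : ∫⁻ p : ℝ, volume {t : ℝ | (t, p) ∈ s} =
      ∫⁻ p : ℝ, (Set.Ioo (0 : ℝ) 1).indicator
        (fun p => ENNReal.ofReal |Finv p - Ginv p|) p := by
    refine lintegral_congr fun p => ?_
    by_cases hp : p ∈ Set.Ioo (0 : ℝ) 1
    · have hset : {t : ℝ | (t, p) ∈ s} = {t : ℝ | Xor' (Finv p ≤ t) (Ginv p ≤ t)} := by
        ext t
        have h1 : Finv p ≤ t ↔ p ≤ cdf μ t := by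
          rw [hFinv p hp]
          simp only [hF']
          exact quantile_mem_aux μ hp t
        have h2 : Ginv p ≤ t ↔ p ≤ cdf ν t := by
          rw [hGinv p hp]
          simp only [hG']
          exact quantile_mem_aux ν hp t
        simp only [hs_def, Set.mem_setOf_eq, hp, true_and, Xor', h1, h2]
      rw [hset, fiberT, Set.indicator_of_mem hp, abs_sub_comm]
    · have hset : {t : ℝ | (t, p) ∈ s} = (∅ : Set ℝ) := by
        ext t
        simp only [hs_def, Set.mem_setOf_eq, Set.mem_empty_iff_false, iff_false]
        rintro ⟨h, -⟩
        exact hp h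
      rw [hset, measure_empty, Set.indicator_of_notMem hp]
  rw [step1, step2, step3, step4, step5, lintegral_indicator measurableSet_Ioo]
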